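/- For any pure bipartite state ρ^{ab} = |ψ⟩⟨ψ| with Schmidt decomposition |ψ⟩ = Σᵢ √sᵢ |αᵢ⟩⊗|βᵢ⟩ and any orthonormal basis {|φₙ⟩} of H^a, the sum of local quantum Fisher informations over the projectors satisfies Σₙ F(ρ^{ab}, |φₙ⟩⟨φₙ|⊗1) = 1 − Σₙ (Σᵢ sᵢ|⟨αᵢ|φₙ⟩|²)² ≥ 1 − Σᵢ sᵢ². -/

import Mathlib

open Matrix BigOperators Kronecker

/-- |v⟩⟨v| as a matrix. -/
noncomputable def ketbra {d : Type*} [Fintype d] (v : d → ℂ) : Matrix d d ℂ :=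
  Matrix.vecMulVec v (star v)

/-- An orthonormal family of vectors. -/
def OrthonormalFam {ι d : Type*} [DecidableEq ι] [Fintype d] (ψ : ι → d → ℂ) : Prop :=
  ∀ i j, star (ψ i) ⬝ᵥ ψ j = if i = j then (1 : ℂ) else 0

/-- Quantum Fisher information computed from a spectral decomposition (p, ψ):
    F = Σ_{i,j : pᵢ+pⱼ>0} (pᵢ-pⱼ)²/(2(pᵢ+pⱼ)) |⟨ψᵢ|H|ψⱼ⟩|². -/
noncomputable def qfi {ι d : Type*} [Fintype ι] [Fintype d]
    (p : ι → ℝ) (ψ : ι → d → ℂ) (H : Matrix d d ℂ) : ℝ :=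
  ∑ i, ∑ j,
    if 0 < p i + p j then
      (p i - p j) ^ 2 / (2 * (p i + p j)) * Complex.normSq (star (ψ i) ⬝ᵥ H *ᵥ ψ j)
    else 0

/-- (p, ψ) is a (full) spectral decomposition of the density matrix ρ. -/
def IsSpectralDecomp {d : Type*} [Fintype d] [DecidableEq d]
    (ρ : Matrix d d ℂ) (p : d → ℝ) (ψ : d → d → ℂ) : Prop :=
  (∀ i, 0 ≤ p i) ∧ (∑ i, p i = 1) ∧ OrthonormalFam ψ ∧ ρ = ∑ i, p i • ketbra (ψ i)

lemma aux_pair {da db : ℕ} (a1 b1 : Fin da → ℂ) (a2 b2 : Fin db → ℂ) (v : Fin da → ℂ) :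
    (star (fun x : Fin da × Fin db => a1 x.1 * a2 x.2)) ⬝ᵥ
      (ketbra v ⊗ₖ (1 : Matrix (Fin db) (Fin db) ℂ)) *ᵥ (fun x => b1 x.1 * b2 x.2)
    = (star a1 ⬝ᵥ v) * (star v ⬝ᵥ b1) * (star a2 ⬝ᵥ b2) := by
  simp only [ketbra, Matrix.mulVec, dotProduct, Matrix.kroneckerMap_apply,
    Matrix.vecMulVec_apply, Matrix.one_apply, Pi.star_apply, Fintype.sum_prod_type,
    mul_ite, ite_mul, mul_zero, zero_mul, mul_one, Finset.sum_ite_eq, Finset.mem_univ, if_true,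
    Finset.mul_sum, Finset.sum_mul]
  rw [Finset.sum_comm]
  congr 1; ext a
  rw [Finset.sum_comm]
  congr 1; ext b
  congr 1; ext a'
  simp only [star_mul']; ring

lemma aux_bilin {n L : Type*} [Fintype n] [Fintype L] (M : Matrix n n ℂ) (γ : L → n → ℂ) :
    star (fun x => ∑ i, γ i x) ⬝ᵥ M *ᵥ (fun x => ∑ i, γ i x)
      = ∑ i, ∑ j, star (γ i) ⬝ᵥ M *ᵥ γ j := by
  have h1 : star (fun x : n => ∑ i, γ i x) = fun x => ∑ i, star (γ i) x := by
    funext x; simp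
  have h2 : M *ᵥ (fun x : n => ∑ i, γ i x) = fun x => ∑ j, (M *ᵥ γ j) x := by
    funext x
    simp only [Matrix.mulVec, dotProduct, Finset.mul_sum]
    rw [Finset.sum_comm]
  rw [h1, h2]
  simp only [dotProduct, Finset.sum_mul, Finset.mul_sum]
  rw [Finset.sum_comm]
  have : ∀ y : L, (∑ x : n, ∑ i : L, star (γ i) x * (M *ᵥ γ y) x)
      = ∑ i : L, ∑ x : n, star (γ i) x * (M *ᵥ γ y) x := fun y => Finset.sum_comm
  simp only [this]
  rw [Finset.sum_comm]

lemma aux_smul_dot {d : Type*} [Fintype d] (c : ℂ) (a v : d → ℂ) :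
    star (fun x => c * a x) ⬝ᵥ v = star c * (star a ⬝ᵥ v) := by
  simp only [dotProduct, Pi.star_apply, star_mul', Finset.mul_sum]
  congr 1; ext x; ring

lemma aux_dot_smul {d : Type*} [Fintype d] (c : ℂ) (a v : d → ℂ) :
    star v ⬝ᵥ (fun x => c * a x) = c * (star v ⬝ᵥ a) := by
  simp only [dotProduct, Pi.star_apply, Finset.mul_sum]
  congr 1; ext x; ring

lemma aux_quad {da db L : ℕ} (s : Fin L → ℝ) (hs : ∀ i, 0 ≤ s i)
    (α : Fin L → Fin da → ℂ) (β : Fin L → Fin db → ℂ) (hβ : OrthonormalFam β)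
    (v : Fin da → ℂ) :
    star (fun x : Fin da × Fin db => ∑ i, (Real.sqrt (s i) : ℂ) * α i x.1 * β i x.2) ⬝ᵥ
      (ketbra v ⊗ₖ (1 : Matrix (Fin db) (Fin db) ℂ)) *ᵥ
      (fun x => ∑ i, (Real.sqrt (s i) : ℂ) * α i x.1 * β i x.2)
    = ((∑ i, s i * Complex.normSq (star (α i) ⬝ᵥ v) : ℝ) : ℂ) := by
  have step : ∀ i j : Fin L,
      star (fun y : Fin da × Fin db => (Real.sqrt (s i) : ℂ) * α i y.1 * β i y.2) ⬝ᵥ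
        (ketbra v ⊗ₖ (1 : Matrix (Fin db) (Fin db) ℂ)) *ᵥ
        (fun y : Fin da × Fin db => (Real.sqrt (s j) : ℂ) * α j y.1 * β j y.2)
      = ((Real.sqrt (s i) : ℂ) * (Real.sqrt (s j) : ℂ) *
          ((star (α i) ⬝ᵥ v) * (star v ⬝ᵥ α j))) * (star (β i) ⬝ᵥ β j) := by
    intro i j
    have hp := aux_pair (fun a => (Real.sqrt (s i) : ℂ) * α i a)
      (fun a => (Real.sqrt (s j) : ℂ) * α j a) (β i) (β j) v
    rw [aux_smul_dot, aux_dot_smul] at hp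
    refine hp.trans ?_
    simp only [Complex.star_def, Complex.conj_ofReal]
    ring
  calc star (fun x : Fin da × Fin db => ∑ i, (Real.sqrt (s i) : ℂ) * α i x.1 * β i x.2) ⬝ᵥ
      (ketbra v ⊗ₖ (1 : Matrix (Fin db) (Fin db) ℂ)) *ᵥ
      (fun x => ∑ i, (Real.sqrt (s i) : ℂ) * α i x.1 * β i x.2)
      = ∑ i, ∑ j, star (fun y : Fin da × Fin db =>
            (Real.sqrt (s i) : ℂ) * α i y.1 * β i y.2) ⬝ᵥ
          (ketbra v ⊗ₖ (1 : Matrix (Fin db) (Fin db) ℂ)) *ᵥ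
          (fun y : Fin da × Fin db => (Real.sqrt (s j) : ℂ) * α j y.1 * β j y.2) :=
        aux_bilin _ (fun i (y : Fin da × Fin db) => (Real.sqrt (s i) : ℂ) * α i y.1 * β i y.2)
    _ = ∑ i, ∑ j, ((Real.sqrt (s i) : ℂ) * (Real.sqrt (s j) : ℂ) *
          ((star (α i) ⬝ᵥ v) * (star v ⬝ᵥ α j))) * (star (β i) ⬝ᵥ β j) := by
        exact Finset.sum_congr rfl fun i _ => Finset.sum_congr rfl fun j _ => step i j
    _ = ((∑ i, s i * Complex.normSq (star (α i) ⬝ᵥ v) : ℝ) : ℂ) := by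
        have hβ' : ∀ i j, star (β i) ⬝ᵥ β j = if i = j then (1 : ℂ) else 0 := hβ
        simp only [hβ', mul_ite, mul_one, mul_zero, Finset.sum_ite_eq, Finset.sum_ite_eq', Finset.mem_univ, if_true]
        rw [Complex.ofReal_sum]
        refine Finset.sum_congr rfl fun i _ => ?_
        have h1 : star v ⬝ᵥ α i = star (star (α i) ⬝ᵥ v) := Matrix.star_dotProduct _ _
        rw [h1]
        simp only [Complex.star_def, Complex.mul_conj]
        have h2 : ((Real.sqrt (s i) : ℂ)) * (Real.sqrt (s i) : ℂ) = ((s i : ℝ) : ℂ) := by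
          rw [← Complex.ofReal_mul, Real.mul_self_sqrt (hs i)]
        rw [h2, ← Complex.ofReal_mul]

lemma aux_complete {d : ℕ} (φ : Fin d → Fin d → ℂ) (hφ : OrthonormalFam φ) :
    ∀ a b, (∑ n, φ n a * star (φ n b)) = if a = b then (1 : ℂ) else 0 := by
  set U : Matrix (Fin d) (Fin d) ℂ := Matrix.of fun n a => star (φ n a) with hU
  have h1 : U * Uᴴ = 1 := by
    ext n m
    simpa [hU, Matrix.mul_apply, Matrix.conjTranspose_apply, Matrix.one_apply,
      dotProduct] using hφ n m
  have h2 : Uᴴ * U = 1 := mul_eq_one_comm.mp h1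
  intro a b
  have h3 : (Uᴴ * U) a b = (1 : Matrix (Fin d) (Fin d) ℂ) a b := by rw [h2]
  simpa [hU, Matrix.mul_apply, Matrix.conjTranspose_apply, Matrix.one_apply] using h3

lemma aux_parseval {d : ℕ} (φ : Fin d → Fin d → ℂ) (hφ : OrthonormalFam φ)
    (x : Fin d → ℂ) (hx : star x ⬝ᵥ x = 1) :
    ∑ n, Complex.normSq (star x ⬝ᵥ φ n) = 1 := by
  have key := aux_complete φ hφ
  have hC : (∑ n, (Complex.normSq (star x ⬝ᵥ φ n) : ℂ)) = 1 := by
    have e1 : ∀ n, (Complex.normSq (star x ⬝ᵥ φ n) : ℂ)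
        = (∑ a, star (x a) * φ n a) * (∑ b, x b * star (φ n b)) := by
      intro n
      rw [← Complex.mul_conj]
      have hz : star x ⬝ᵥ φ n = ∑ a, star (x a) * φ n a := rfl
      have hz2 : (starRingEnd ℂ) (∑ a, star (x a) * φ n a) = ∑ b, x b * star (φ n b) := by
        rw [map_sum]
        congr 1; ext b
        simp [mul_comm]
      rw [hz, hz2]
    simp only [e1, Finset.sum_mul, Finset.mul_sum]
    rw [Finset.sum_comm]
    have e2 : ∀ b, (∑ n : Fin d, ∑ a, star (x a) * φ n a * (x b * star (φ n b)))
        = star (x b) * x b := by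
      intro b
      rw [Finset.sum_comm]
      have e3 : ∀ a, (∑ n, star (x a) * φ n a * (x b * star (φ n b)))
          = star (x a) * x b * (∑ n, φ n a * star (φ n b)) := by
        intro a
        rw [Finset.mul_sum]
        congr 1; ext n; ring
      simp only [e3, key, mul_ite, mul_one, mul_zero, Finset.sum_ite_eq', Finset.mem_univ,
        if_true]
    calc ∑ b, ∑ n : Fin d, ∑ a, star (x a) * φ n a * (x b * star (φ n b))
        = ∑ b, star (x b) * x b := Finset.sum_congr rfl fun b _ => e2 b
      _ = 1 := by simpa [dotProduct] using hx
  exact_mod_cast hC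

lemma aux_bessel {L d : ℕ} (α : Fin L → Fin d → ℂ) (hα : OrthonormalFam α)
    (x : Fin d → ℂ) (hx : star x ⬝ᵥ x = 1) :
    ∑ i, Complex.normSq (star (α i) ⬝ᵥ x) ≤ 1 := by
  set W : Matrix (Fin L) (Fin d) ℂ := Matrix.of fun i a => star (α i a) with hW
  have h1 : W * Wᴴ = 1 := by
    ext i j
    simpa [hW, Matrix.mul_apply, Matrix.conjTranspose_apply, Matrix.one_apply,
      dotProduct] using hα i j
  set M : Matrix (Fin d) (Fin d) ℂ := Wᴴ * W with hM
  have hMH : Mᴴ = M := by rw [hM, Matrix.conjTranspose_mul, Matrix.conjTranspose_conjTranspose]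
  have hM2 : M * M = M := by
    rw [hM, Matrix.mul_assoc, ← Matrix.mul_assoc W, h1, Matrix.one_mul]
  have hWx : W *ᵥ x = fun i => star (α i) ⬝ᵥ x := by
    funext i; simp [hW, Matrix.mulVec, dotProduct]
  have hq : star x ⬝ᵥ M *ᵥ x = ((∑ i, Complex.normSq (star (α i) ⬝ᵥ x) : ℝ) : ℂ) := by
    rw [hM, ← Matrix.mulVec_mulVec, Matrix.dotProduct_mulVec, ← Matrix.star_mulVec, hWx]
    simp [dotProduct, Complex.normSq_eq_conj_mul_self, Complex.star_def]
  have hfact : (1 - M) = (1 - M)ᴴ * (1 - M) := by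
    rw [Matrix.conjTranspose_sub, Matrix.conjTranspose_one, hMH, Matrix.sub_mul,
      Matrix.mul_sub, Matrix.mul_sub, hM2]
    simp
  have hpos : star x ⬝ᵥ (1 - M) *ᵥ x
      = ((∑ k, Complex.normSq (((1 - M) *ᵥ x) k) : ℝ) : ℂ) := by
    conv_lhs => rw [hfact, ← Matrix.mulVec_mulVec, Matrix.dotProduct_mulVec,
      ← Matrix.star_mulVec]
    simp [dotProduct, Complex.normSq_eq_conj_mul_self, Complex.star_def]
  have hsub : star x ⬝ᵥ (1 - M) *ᵥ x
      = 1 - ((∑ i, Complex.normSq (star (α i) ⬝ᵥ x) : ℝ) : ℂ) := by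
    rw [Matrix.sub_mulVec, dotProduct_sub, hq, Matrix.one_mulVec, hx]
  have hre : 1 - (∑ i, Complex.normSq (star (α i) ⬝ᵥ x))
      = ∑ k, Complex.normSq (((1 - M) *ᵥ x) k) := by
    have := hsub.symm.trans hpos
    exact_mod_cast this
  have : 0 ≤ ∑ k, Complex.normSq (((1 - M) *ᵥ x) k) :=
    Finset.sum_nonneg fun k _ => Complex.normSq_nonneg _
  linarith


theorem stmt15 {da db L : ℕ}
    (s : Fin L → ℝ) (hs : ∀ i, 0 < s i) (hsum : ∑ i, s i = 1)
    (α : Fin L → Fin da → ℂ) (hα : OrthonormalFam α)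
    (β : Fin L → Fin db → ℂ) (hβ : OrthonormalFam β)
    (φ : Fin da → Fin da → ℂ) (hφ : OrthonormalFam φ)
    (ψ : Fin da × Fin db → ℂ)
    (hψ : ψ = fun x => ∑ i, (Real.sqrt (s i) : ℂ) * α i x.1 * β i x.2)
    (P : Fin da → Matrix (Fin da × Fin db) (Fin da × Fin db) ℂ)
    (hP : P = fun n => ketbra (φ n) ⊗ₖ (1 : Matrix (Fin db) (Fin db) ℂ)) :
    (∑ n, ((star ψ ⬝ᵥ (P n * P n) *ᵥ ψ).re - ((star ψ ⬝ᵥ P n *ᵥ ψ).re) ^ 2)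
        = 1 - ∑ n, (∑ i, s i * Complex.normSq (star (α i) ⬝ᵥ φ n)) ^ 2) ∧
      1 - ∑ i, s i ^ 2 ≤
        ∑ n, ((star ψ ⬝ᵥ (P n * P n) *ᵥ ψ).re - ((star ψ ⬝ᵥ P n *ᵥ ψ).re) ^ 2) := by
  have hs' : ∀ i, 0 ≤ s i := fun i => (hs i).le
  -- projector property
  have hketb : ∀ n, ketbra (φ n) * ketbra (φ n) = ketbra (φ n) := by
    intro n
    have hn : ∑ c, star (φ n c) * φ n c = 1 := by
      simpa [dotProduct] using hφ n n
    ext a b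
    simp only [ketbra, Matrix.mul_apply, Matrix.vecMulVec_apply, Pi.star_apply]
    calc ∑ c, φ n a * star (φ n c) * (φ n c * star (φ n b))
        = (φ n a * star (φ n b)) * ∑ c, star (φ n c) * φ n c := by
          rw [Finset.mul_sum]; congr 1; ext c; ring
      _ = φ n a * star (φ n b) := by rw [hn, mul_one]
  have hproj : ∀ n, P n * P n = P n := by
    intro n
    rw [hP]
    show (ketbra (φ n) ⊗ₖ (1 : Matrix (Fin db) (Fin db) ℂ)) *
        (ketbra (φ n) ⊗ₖ (1 : Matrix (Fin db) (Fin db) ℂ))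
      = ketbra (φ n) ⊗ₖ (1 : Matrix (Fin db) (Fin db) ℂ)
    rw [← Matrix.mul_kronecker_mul, Matrix.one_mul, hketb n]
  -- value of the quadratic form
  set q : Fin da → ℝ := fun n => ∑ i, s i * Complex.normSq (star (α i) ⬝ᵥ φ n) with hqdef
  have hval : ∀ n, star ψ ⬝ᵥ P n *ᵥ ψ = ((q n : ℝ) : ℂ) := by
    intro n
    rw [hψ, hP]
    exact aux_quad s hs' α β hβ (φ n)
  have hterm : ∀ n, (star ψ ⬝ᵥ (P n * P n) *ᵥ ψ).re - ((star ψ ⬝ᵥ P n *ᵥ ψ).re) ^ 2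
      = q n - (q n) ^ 2 := by
    intro n
    rw [hproj n, hval n]
    simp
  have hpars : ∀ i : Fin L, (∑ n, s i * Complex.normSq (star (α i) ⬝ᵥ φ n)) = s i := by
    intro i
    rw [← Finset.mul_sum, aux_parseval φ hφ (α i) (by simpa using hα i i), mul_one]
  have hq1 : ∑ n, q n = 1 := by
    calc ∑ n, q n = ∑ n, ∑ i, s i * Complex.normSq (star (α i) ⬝ᵥ φ n) := rfl
      _ = ∑ i, ∑ n, s i * Complex.normSq (star (α i) ⬝ᵥ φ n) := Finset.sum_comm
      _ = ∑ i, s i := Finset.sum_congr rfl fun i _ => hpars i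
      _ = 1 := hsum
  constructor
  · simp only [hterm, Finset.sum_sub_distrib, hq1]; rfl
  · simp only [hterm, Finset.sum_sub_distrib, hq1]
    have hle : ∑ n, (q n) ^ 2 ≤ ∑ i, s i ^ 2 := by
      have hCS : ∀ n, (q n) ^ 2 ≤ ∑ i, s i ^ 2 * Complex.normSq (star (α i) ⬝ᵥ φ n) := by
        intro n
        have hb := aux_bessel α hα (φ n) (by simpa using hφ n n)
        have hcs := Finset.sum_mul_sq_le_sq_mul_sq Finset.univ
          (fun i => s i * Real.sqrt (Complex.normSq (star (α i) ⬝ᵥ φ n)))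
          (fun i => Real.sqrt (Complex.normSq (star (α i) ⬝ᵥ φ n)))
        have e1 : ∀ i : Fin L, s i * Real.sqrt (Complex.normSq (star (α i) ⬝ᵥ φ n)) *
            Real.sqrt (Complex.normSq (star (α i) ⬝ᵥ φ n))
            = s i * Complex.normSq (star (α i) ⬝ᵥ φ n) := by
          intro i
          rw [mul_assoc, Real.mul_self_sqrt (Complex.normSq_nonneg _)]
        have e2 : ∀ i : Fin L, (s i * Real.sqrt (Complex.normSq (star (α i) ⬝ᵥ φ n))) ^ 2
            = s i ^ 2 * Complex.normSq (star (α i) ⬝ᵥ φ n) := by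
          intro i
          rw [mul_pow, Real.sq_sqrt (Complex.normSq_nonneg _)]
        have e3 : ∀ i : Fin L, (Real.sqrt (Complex.normSq (star (α i) ⬝ᵥ φ n))) ^ 2
            = Complex.normSq (star (α i) ⬝ᵥ φ n) := fun i =>
          Real.sq_sqrt (Complex.normSq_nonneg _)
        simp only [e1, e2, e3] at hcs
        calc (q n) ^ 2 ≤ (∑ i, s i ^ 2 * Complex.normSq (star (α i) ⬝ᵥ φ n)) *
              (∑ i, Complex.normSq (star (α i) ⬝ᵥ φ n)) := hcs
          _ ≤ (∑ i, s i ^ 2 * Complex.normSq (star (α i) ⬝ᵥ φ n)) * 1 := by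
              apply mul_le_mul_of_nonneg_left hb
              exact Finset.sum_nonneg fun i _ =>
                mul_nonneg (sq_nonneg _) (Complex.normSq_nonneg _)
          _ = ∑ i, s i ^ 2 * Complex.normSq (star (α i) ⬝ᵥ φ n) := by rw [mul_one]
      have hpars2 : ∀ i : Fin L, (∑ n, s i ^ 2 * Complex.normSq (star (α i) ⬝ᵥ φ n))
          = s i ^ 2 := by
        intro i
        rw [← Finset.mul_sum, aux_parseval φ hφ (α i) (by simpa using hα i i), mul_one]
      calc ∑ n, (q n) ^ 2 ≤ ∑ n, ∑ i, s i ^ 2 * Complex.normSq (star (α i) ⬝ᵥ φ n) :=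
            Finset.sum_le_sum fun n _ => hCS n
        _ = ∑ i, ∑ n, s i ^ 2 * Complex.normSq (star (α i) ⬝ᵥ φ n) := Finset.sum_comm
        _ = ∑ i, s i ^ 2 := Finset.sum_congr rfl fun i _ => hpars2 i
    linarith
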